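/- Define an equivalence relation on (0,∞) by λ ∼ μ iff λ = μ^q for some nonzero rational q. A function h : ℝ* → ℝ* is a local automorphism of the multiplicative group ℝ* (i.e., for every pair λ, μ ∈ ℝ* there is a group automorphism f of ℝ* with h(λ)=f(λ), h(μ)=f(μ)) if and only if: h maps (0,∞) to itself, h(1)=1, for positive λ, μ one has λ ∼ μ ⟺ h(λ) ∼ h(μ), if λ = μ^q with q ∈ ℚ* then h(λ) = h(μ)^q, and h(-λ) = -h(λ) for every nonzero λ. -/

import Mathlib

/-- `f` is an automorphism of the multiplicative group `ℝ* = ℝ \ {0}` (as a self-map of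
`ℝ`, only values at nonzero points being relevant). -/
def IsMulAutoRStar (f : ℝ → ℝ) : Prop :=
  Set.BijOn f {x : ℝ | x ≠ 0} {x : ℝ | x ≠ 0} ∧
    ∀ x y : ℝ, x ≠ 0 → y ≠ 0 → f (x * y) = f x * f y

section Aux
open Cardinal Set

open Cardinal
lemma aleph0_le_rank_rat_real : ℵ₀ ≤ Module.rank ℚ ℝ := by
  by_contra hlt
  rw [not_le] at hlt
  have hfin : Module.Finite ℚ ℝ := Module.rank_lt_aleph0_iff.mp hlt
  have hc : Countable ℝ := by
    let b := Module.Free.chooseBasis ℚ ℝ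
    exact Countable.of_equiv _ b.repr.toEquiv.symm
  exact not_countable (α := ℝ) hc


open Cardinal Set

lemma mk_diff_eq_of_finite {α : Type*} {s T : Set α} (hsT : s ⊆ T) (hs : s.Finite)
    (hT : ℵ₀ ≤ #T) : #(T \ s : Set α) = #T := by
  have key : #(T \ s : Set α) + #s = #T := Cardinal.mk_diff_add_mk hsT
  have hslt : #s < ℵ₀ := by haveI := hs.to_subtype; exact lt_aleph0_of_finite _
  have hd : ℵ₀ ≤ #(T \ s : Set α) := by
    by_contra hlt
    rw [not_le] at hlt
    have : #T < ℵ₀ := by rw [← key]; exact Cardinal.add_lt_aleph0 hlt hslt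
    exact absurd hT (not_le.mpr this)
  refine le_antisymm (Cardinal.mk_le_mk_of_subset diff_subset) ?_
  calc #T = #(T \ s : Set α) + #s := key.symm
    _ ≤ #(T \ s : Set α) + #(T \ s : Set α) := by
        exact add_le_add le_rfl (hslt.le.trans hd)
    _ = #(T \ s : Set α) := Cardinal.add_eq_self hd



lemma pair_indep {x y : ℝ} (hx : x ≠ 0) (hnot : ¬ ∃ q : ℚ, y = q • x) :
    LinearIndependent ℚ ![x, y] := by
  rw [LinearIndependent.pair_iff]
  intro s t hst
  have hst' : (s : ℝ) * x + (t : ℝ) * y = 0 := by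
    simpa [Rat.smul_def] using hst
  have ht : t = 0 := by
    by_contra ht
    refine hnot ⟨-s / t, ?_⟩
    have htR : (t : ℝ) ≠ 0 := by exact_mod_cast ht
    show y = ((-s / t : ℚ) : ℝ) * x
    push_cast
    field_simp
    linarith
  subst ht
  have hs : (s : ℝ) * x = 0 := by simpa using hst'
  have : (s : ℝ) = 0 := by
    rcases mul_eq_zero.mp hs with h | h
    · exact h
    · exact absurd h hx
  exact ⟨by exact_mod_cast this, rfl⟩

end Aux

section Aux2
open Cardinal Set
lemma exists_linearEquiv {ι : Type} [Fintype ι] (v v' : ι → ℝ)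
    (hv : LinearIndependent ℚ v) (hv' : LinearIndependent ℚ v') :
    ∃ g : ℝ ≃ₗ[ℚ] ℝ, ∀ i, g (v i) = v' i := by
  classical
  have hs : LinearIndepOn ℚ id (Set.range v) := (linearIndepOn_id_range_iff hv.injective).mpr hv
  have hs' : LinearIndepOn ℚ id (Set.range v') := (linearIndepOn_id_range_iff hv'.injective).mpr hv'
  let B := Module.Basis.extend hs
  let B' := Module.Basis.extend hs'
  have hsub : Set.range v ⊆ hs.extend (Set.subset_univ _) := hs.subset_extend _
  have hsub' : Set.range v' ⊆ hs'.extend (Set.subset_univ _) := hs'.subset_extend _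
  have hmkT : #(hs.extend (Set.subset_univ _)) = Module.rank ℚ ℝ := B.mk_eq_rank''
  have hmkT' : #(hs'.extend (Set.subset_univ _)) = Module.rank ℚ ℝ := B'.mk_eq_rank''
  have hinfT : ℵ₀ ≤ #(hs.extend (Set.subset_univ _)) := hmkT ▸ aleph0_le_rank_rat_real
  have hinfT' : ℵ₀ ≤ #(hs'.extend (Set.subset_univ _)) := hmkT' ▸ aleph0_le_rank_rat_real
  have hdiff : #(hs.extend (Set.subset_univ _) \ Set.range v : Set ℝ)
      = #(hs'.extend (Set.subset_univ _) \ Set.range v' : Set ℝ) := by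
    rw [mk_diff_eq_of_finite hsub (Set.finite_range v) hinfT,
        mk_diff_eq_of_finite hsub' (Set.finite_range v') hinfT', hmkT, hmkT']
  obtain ⟨e₀⟩ := Cardinal.eq.mp hdiff
  let e₁ : (Set.range v : Set ℝ) ≃ (Set.range v' : Set ℝ) :=
    (Equiv.ofInjective v hv.injective).symm.trans (Equiv.ofInjective v' hv'.injective)
  let e : (hs.extend (Set.subset_univ _) : Set ℝ) ≃ (hs'.extend (Set.subset_univ _) : Set ℝ) :=
    (Equiv.Set.sumDiffSubset hsub).symm.trans
      ((Equiv.sumCongr e₁ e₀).trans (Equiv.Set.sumDiffSubset hsub'))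
  refine ⟨B.equiv B' e, fun i => ?_⟩
  have hvT : v i ∈ hs.extend (Set.subset_univ _) := hsub ⟨i, rfl⟩
  have hB : B ⟨v i, hvT⟩ = v i := Module.Basis.extend_apply_self hs ⟨v i, hvT⟩
  have he : e ⟨v i, hvT⟩ = ⟨v' i, hsub' ⟨i, rfl⟩⟩ := by
    show (Equiv.Set.sumDiffSubset hsub')
      ((Equiv.sumCongr e₁ e₀) ((Equiv.Set.sumDiffSubset hsub).symm ⟨v i, hvT⟩)) = _
    rw [Equiv.Set.sumDiffSubset_symm_apply_of_mem hsub (x := ⟨v i, hvT⟩) ⟨i, rfl⟩]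
    have h1 : e₁ ⟨v i, ⟨i, rfl⟩⟩ = ⟨v' i, ⟨i, rfl⟩⟩ := by
      show (Equiv.ofInjective v' hv'.injective)
        ((Equiv.ofInjective v hv.injective).symm ⟨v i, ⟨i, rfl⟩⟩) = _
      have h2 : (Equiv.ofInjective v hv.injective).symm ⟨v i, ⟨i, rfl⟩⟩ = i := by
        apply (Equiv.ofInjective v hv.injective).injective
        simp [Equiv.ofInjective_apply]
      rw [h2]; rfl
    simp only [Equiv.sumCongr_apply, Sum.map_inl, h1,
      Equiv.Set.sumDiffSubset_apply_inl]
  calc (B.equiv B' e) (v i) = (B.equiv B' e) (B ⟨v i, hvT⟩) := by rw [hB]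
    _ = B' (e ⟨v i, hvT⟩) := B.equiv_apply _ _ _
    _ = v' i := by rw [he]; exact Module.Basis.extend_apply_self hs' ⟨v' i, hsub' ⟨i, rfl⟩⟩
lemma exists_pair (a b a' b' : ℝ)
    (h1 : ∀ q : ℚ, b = q • a → b' = q • a')
    (h2 : ∀ q : ℚ, a = q • b → a' = q • b')
    (h3 : ∀ q : ℚ, b' = q • a' → b = q • a)
    (h4 : ∀ q : ℚ, a' = q • b' → a = q • b) :
    ∃ g : ℝ ≃ₗ[ℚ] ℝ, g a = a' ∧ g b = b' := by
  by_cases hA : ∃ q : ℚ, b = q • a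
  · obtain ⟨q, hq⟩ := hA
    have hb' : b' = q • a' := h1 q hq
    by_cases ha : a = 0
    · have ha' : a' = 0 := by
        have := h2 0 (by simp [ha])
        simpa using this
      exact ⟨LinearEquiv.refl ℚ ℝ, by simp [ha, ha'], by simp [hq, hb', ha, ha']⟩
    · have ha' : a' ≠ 0 := by
        intro h0
        exact ha (by simpa using h4 0 (by simp [h0]))
      obtain ⟨g, hg⟩ := exists_linearEquiv (fun _ : Unit => a) (fun _ : Unit => a')
        (linearIndependent_unique_iff.mpr ha) (linearIndependent_unique_iff.mpr ha')
      exact ⟨g, hg (), by rw [hq, hb', map_smul, hg ()]⟩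
  · by_cases hB : ∃ q : ℚ, a = q • b
    · obtain ⟨q, hq⟩ := hB
      have ha' : a' = q • b' := h2 q hq
      have hb : b ≠ 0 := by
        intro h0
        exact hA ⟨0, by simp [h0, hq]⟩
      have hb' : b' ≠ 0 := by
        intro h0
        exact hA ⟨0, by simpa using h3 0 (by simp [h0])⟩
      obtain ⟨g, hg⟩ := exists_linearEquiv (fun _ : Unit => b) (fun _ : Unit => b')
        (linearIndependent_unique_iff.mpr hb) (linearIndependent_unique_iff.mpr hb')
      exact ⟨g, by rw [hq, ha', map_smul, hg ()], hg ()⟩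
    · have ha : a ≠ 0 := fun h0 => hB ⟨0, by simp [h0]⟩
      have hindep : LinearIndependent ℚ ![a, b] := pair_indep ha hA
      have hA' : ¬ ∃ q : ℚ, b' = q • a' := fun ⟨q, hq⟩ => hA ⟨q, h3 q hq⟩
      have hB' : ¬ ∃ q : ℚ, a' = q • b' := fun ⟨q, hq⟩ => hB ⟨q, h4 q hq⟩
      have ha' : a' ≠ 0 := fun h0 => hB' ⟨0, by simp [h0]⟩
      have hindep' : LinearIndependent ℚ ![a', b'] := pair_indep ha' hA'
      obtain ⟨g, hg⟩ := exists_linearEquiv ![a, b] ![a', b'] hindep hindep'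
      exact ⟨g, by simpa using hg 0, by simpa using hg 1⟩
noncomputable def FofG (g : ℝ → ℝ) (x : ℝ) : ℝ :=
  if 0 < x then Real.exp (g (Real.log x)) else -Real.exp (g (Real.log (-x)))

lemma FofG_pos {g : ℝ → ℝ} {x : ℝ} (hx : 0 < x) :
    FofG g x = Real.exp (g (Real.log x)) := if_pos hx

lemma FofG_neg {g : ℝ → ℝ} {x : ℝ} (hx : x < 0) :
    FofG g x = -Real.exp (g (Real.log (-x))) := if_neg (not_lt.mpr hx.le)

lemma FofG_ne_zero (g : ℝ → ℝ) (x : ℝ) : FofG g x ≠ 0 := by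
  unfold FofG
  split
  · exact (Real.exp_pos _).ne'
  · exact neg_ne_zero.mpr (Real.exp_pos _).ne'

lemma FofG_mul (g : ℝ →+ ℝ) {x y : ℝ} (hx : x ≠ 0) (hy : y ≠ 0) :
    FofG g (x * y) = FofG g x * FofG g y := by
  have key : ∀ s t : ℝ, 0 < s → 0 < t →
      Real.exp (g (Real.log (s * t))) =
        Real.exp (g (Real.log s)) * Real.exp (g (Real.log t)) := by
    intro s t hs ht
    rw [Real.log_mul hs.ne' ht.ne', map_add, Real.exp_add]
  rcases hx.lt_or_gt with hx | hx <;> rcases hy.lt_or_gt with hy | hy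
  · have hxy : 0 < x * y := mul_pos_of_neg_of_neg hx hy
    rw [FofG_pos hxy, FofG_neg hx, FofG_neg hy]
    rw [show x * y = (-x) * (-y) by ring, key _ _ (by linarith) (by linarith)]
    ring
  · have hxy : x * y < 0 := mul_neg_of_neg_of_pos hx hy
    rw [FofG_neg hxy, FofG_neg hx, FofG_pos hy]
    rw [show -(x * y) = (-x) * y by ring, key _ _ (by linarith) hy]
    ring
  · have hxy : x * y < 0 := mul_neg_of_pos_of_neg hx hy
    rw [FofG_neg hxy, FofG_pos hx, FofG_neg hy]
    rw [show -(x * y) = x * (-y) by ring, key _ _ hx (by linarith)]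
    ring
  · have hxy : 0 < x * y := mul_pos hx hy
    rw [FofG_pos hxy, FofG_pos hx, FofG_pos hy, key _ _ hx hy]

lemma FofG_leftinv (g : ℝ ≃ₗ[ℚ] ℝ) {x : ℝ} (hx : x ≠ 0) :
    FofG (g.symm : ℝ → ℝ) (FofG (g : ℝ → ℝ) x) = x := by
  rcases hx.lt_or_gt with hx | hx
  · rw [FofG_neg hx]
    have h1 : (-Real.exp ((g : ℝ → ℝ) (Real.log (-x)))) < 0 := by
      simpa using (Real.exp_pos _)
    rw [FofG_neg h1, neg_neg, Real.log_exp, LinearEquiv.symm_apply_apply,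
      Real.exp_log (by linarith : (0:ℝ) < -x), neg_neg]
  · rw [FofG_pos hx, FofG_pos (Real.exp_pos _), Real.log_exp]
    simp [Real.exp_log hx]

lemma FofG_isMulAuto (g : ℝ ≃ₗ[ℚ] ℝ) : IsMulAutoRStar (FofG (g : ℝ → ℝ)) := by
  constructor
  · have hmt : ∀ (g' : ℝ → ℝ), Set.MapsTo (FofG g') {x : ℝ | x ≠ 0} {x : ℝ | x ≠ 0} :=
      fun g' x _ => FofG_ne_zero g' x
    refine Set.InvOn.bijOn (f' := FofG (g.symm : ℝ → ℝ)) ⟨?_, ?_⟩ (hmt _) (hmt _)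
    · intro x hx; exact FofG_leftinv g hx
    · intro y hy
      have := FofG_leftinv g.symm (x := y) hy
      simpa using this
  · intro x y hx hy
    exact FofG_mul (g : ℝ →+ ℝ) hx hy
namespace IsMulAutoRStar
variable {f : ℝ → ℝ} (hf : IsMulAutoRStar f)
include hf

lemma ne_zero {x : ℝ} (hx : x ≠ 0) : f x ≠ 0 := hf.1.mapsTo hx

lemma one : f 1 = 1 := by
  have h1 : f 1 ≠ 0 := hf.ne_zero one_ne_zero
  have h2 := hf.2 1 1 one_ne_zero one_ne_zero
  rw [mul_one] at h2
  have h3 : f 1 * 1 = f 1 * f 1 := by rw [mul_one, ← h2]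
  exact (mul_left_cancel₀ h1 h3).symm

lemma pos {x : ℝ} (hx : 0 < x) : 0 < f x := by
  have hs : Real.sqrt x ≠ 0 := (Real.sqrt_pos.mpr hx).ne'
  have hx2 : x = Real.sqrt x * Real.sqrt x := (Real.mul_self_sqrt hx.le).symm
  have := hf.2 _ _ hs hs
  rw [← hx2] at this
  rw [this]
  exact mul_self_pos.mpr (hf.ne_zero hs)

lemma neg_one : f (-1) = -1 := by
  have key : f (-1) * f (-1) = 1 := by
    rw [← hf.2 (-1) (-1) (by norm_num) (by norm_num)]
    norm_num [hf.one]
  rcases mul_self_eq_one_iff.mp key with h | h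
  · exfalso
    have h1 : f (-1) = f 1 := by rw [h, hf.one]
    have := hf.1.injOn (show (-1:ℝ) ∈ {x : ℝ | x ≠ 0} by norm_num)
      (show (1:ℝ) ∈ {x : ℝ | x ≠ 0} by norm_num) h1
    norm_num at this
  · exact h

lemma odd {x : ℝ} (hx : x ≠ 0) : f (-x) = -f x := by
  have := hf.2 (-1) x (by norm_num) hx
  rw [neg_one_mul, hf.neg_one, neg_one_mul] at this
  exact this

lemma inv {x : ℝ} (hx : x ≠ 0) : f x⁻¹ = (f x)⁻¹ := by
  have := hf.2 x x⁻¹ hx (inv_ne_zero hx)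
  rw [mul_inv_cancel₀ hx, hf.one] at this
  exact eq_inv_of_mul_eq_one_right this.symm

lemma npow {x : ℝ} (hx : x ≠ 0) (n : ℕ) : f (x ^ n) = f x ^ n := by
  induction n with
  | zero => simpa using hf.one
  | succ n ih =>
    rw [pow_succ, pow_succ, hf.2 _ _ (pow_ne_zero _ hx) hx, ih]

lemma zpow {x : ℝ} (hx : x ≠ 0) (n : ℤ) : f (x ^ n) = f x ^ n := by
  cases n with
  | ofNat n => simpa using hf.npow hx n
  | negSucc n =>
    rw [zpow_negSucc, zpow_negSucc, hf.inv (pow_ne_zero _ hx), hf.npow hx]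

lemma rpow {x : ℝ} (hx : 0 < x) (q : ℚ) : f (x ^ (q : ℝ)) = f x ^ (q : ℝ) := by
  set y := x ^ (q : ℝ) with hy
  have hy0 : 0 < y := Real.rpow_pos_of_pos hx _
  have hfy : 0 < f y := hf.pos hy0
  have hfx : 0 < f x := hf.pos hx
  have hden : (q.den : ℝ) ≠ 0 := Nat.cast_ne_zero.mpr q.den_nz
  have hq : (q : ℝ) * q.den = q.num := by
    rw [Rat.cast_def]
    field_simp
  have key : f y ^ (q.den : ℕ) = f x ^ (q.num : ℤ) := by
    rw [← hf.npow hy0.ne' q.den, ← hf.zpow hx.ne' q.num]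
    congr 1
    rw [← Real.rpow_natCast y q.den, ← Real.rpow_intCast x q.num, hy,
      ← Real.rpow_mul hx.le, hq]
  have key' : f y ^ ((q.den : ℕ) : ℝ) = f x ^ ((q.num : ℤ) : ℝ) := by
    rw [Real.rpow_natCast, Real.rpow_intCast, key]
  have : f y = (f y ^ ((q.den : ℕ) : ℝ)) ^ ((q.den : ℝ)⁻¹) := by
    rw [← Real.rpow_mul hfy.le, mul_inv_cancel₀ hden, Real.rpow_one]
  rw [this, key', ← Real.rpow_mul hfx.le]
  congr 1
  rw [Rat.cast_def]
  ring

end IsMulAutoRStar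

lemma rpow_iff_log {l m : ℝ} (hl : 0 < l) (hm : 0 < m) (q : ℚ) :
    m = l ^ (q : ℝ) ↔ Real.log m = q • Real.log l := by
  rw [Rat.smul_def]
  constructor
  · rintro rfl
    rw [Real.log_rpow hl]
  · intro hlog
    rw [← Real.exp_log hm, hlog, Real.rpow_def_of_pos hl, mul_comm]

lemma FofG_val {h : ℝ → ℝ} (hodd : ∀ lam : ℝ, lam ≠ 0 → h (-lam) = -h lam)
    (hpos : ∀ lam : ℝ, 0 < lam → 0 < h lam) (g : ℝ ≃ₗ[ℚ] ℝ) (x : ℝ) (hx : x ≠ 0)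
    (hval : g (Real.log |x|) = Real.log (h |x|)) : h x = FofG (g : ℝ → ℝ) x := by
  rcases hx.lt_or_gt with hneg | hp
  · have habs : |x| = -x := abs_of_neg hneg
    rw [FofG_neg hneg]
    rw [habs] at hval
    rw [hval, Real.exp_log (hpos _ (by linarith))]
    have := hodd (-x) (by simpa using hneg.ne)
    rw [neg_neg] at this
    rw [this]
  · have habs : |x| = x := abs_of_pos hp
    rw [FofG_pos hp]
    rw [habs] at hval
    rw [hval, Real.exp_log (hpos _ hp)]

end Aux2

theorem stmt_19 (h : ℝ → ℝ) :
    (∀ lam μ : ℝ, lam ≠ 0 → μ ≠ 0 →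
      ∃ f : ℝ → ℝ, IsMulAutoRStar f ∧ h lam = f lam ∧ h μ = f μ) ↔
    ((∀ lam : ℝ, 0 < lam → 0 < h lam) ∧
      h 1 = 1 ∧
      (∀ lam μ : ℝ, 0 < lam → 0 < μ →
        ((∃ q : ℚ, q ≠ 0 ∧ lam = μ ^ (q : ℝ)) ↔
          (∃ q : ℚ, q ≠ 0 ∧ h lam = h μ ^ (q : ℝ)))) ∧
      (∀ lam μ : ℝ, 0 < lam → 0 < μ → ∀ q : ℚ, q ≠ 0 →
        lam = μ ^ (q : ℝ) → h lam = h μ ^ (q : ℝ)) ∧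
      (∀ lam : ℝ, lam ≠ 0 → h (-lam) = -h lam)) := by
  constructor
  · intro H
    refine ⟨?_, ?_, ?_, ?_, ?_⟩
    · intro lam hl
      obtain ⟨f, hf, e1, -⟩ := H lam lam hl.ne' hl.ne'
      rw [e1]; exact hf.pos hl
    · obtain ⟨f, hf, e1, -⟩ := H 1 1 one_ne_zero one_ne_zero
      rw [e1]; exact hf.one
    · intro lam μ hl hm
      constructor
      · rintro ⟨q, hq, hpow⟩
        obtain ⟨f, hf, e1, e2⟩ := H lam μ hl.ne' hm.ne'
        exact ⟨q, hq, by rw [e1, e2, hpow, hf.rpow hm]⟩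
      · rintro ⟨q, hq, hpow⟩
        obtain ⟨f, hf, e1, e2⟩ := H lam μ hl.ne' hm.ne'
        refine ⟨q, hq, ?_⟩
        have hmq : (0:ℝ) < μ ^ (q : ℝ) := Real.rpow_pos_of_pos hm _
        have hfeq : f lam = f (μ ^ (q : ℝ)) := by
          rw [← e1, hpow, e2, hf.rpow hm]
        exact hf.1.injOn hl.ne' hmq.ne' hfeq
    · intro lam μ hl hm q hq hpow
      obtain ⟨f, hf, e1, e2⟩ := H lam μ hl.ne' hm.ne'
      rw [e1, e2, hpow, hf.rpow hm]
    · intro lam hl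
      obtain ⟨f, hf, e1, e2⟩ := H (-lam) lam (neg_ne_zero.mpr hl) hl
      rw [e1, e2, hf.odd hl]
  · rintro ⟨hpos, hone, hrel, hhom, hodd⟩ lam μ hl hm
    have hinv1 : ∀ x : ℝ, 0 < x → h x = 1 → x = 1 := by
      intro x hx hx1
      obtain ⟨q, -, hq⟩ := (hrel x 1 hx one_pos).mpr
        ⟨1, one_ne_zero, by rw [hx1, hone, Real.one_rpow]⟩
      rw [hq, Real.one_rpow]
    have c1 : ∀ x y : ℝ, 0 < x → 0 < y → ∀ q : ℚ,
        Real.log y = q • Real.log x → Real.log (h y) = q • Real.log (h x) := by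
      intro x y hx hy q hlog
      have hyx : y = x ^ (q : ℝ) := (rpow_iff_log hx hy q).mpr hlog
      by_cases hq : q = 0
      · subst hq
        have : y = 1 := by rw [hyx, Rat.cast_zero, Real.rpow_zero]
        rw [this, hone, Real.log_one]
        simp
      · exact (rpow_iff_log (hpos x hx) (hpos y hy) q).mp (hhom y x hy hx q hq hyx)
    have c2 : ∀ x y : ℝ, 0 < x → 0 < y → ∀ q : ℚ,
        Real.log (h y) = q • Real.log (h x) → Real.log y = q • Real.log x := by
      intro x y hx hy q hlog
      have hyx : h y = h x ^ (q : ℝ) := (rpow_iff_log (hpos x hx) (hpos y hy) q).mpr hlog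
      by_cases hq : q = 0
      · subst hq
        have hy1 : h y = 1 := by rw [hyx, Rat.cast_zero, Real.rpow_zero]
        rw [hinv1 y hy hy1, Real.log_one]
        simp
      · by_cases hx1 : h x = 1
        · have hy1 : h y = 1 := by rw [hyx, hx1, Real.one_rpow]
          rw [hinv1 y hy hy1, hinv1 x hx hx1, Real.log_one]
          simp
        · obtain ⟨q', hq', hyx'⟩ := (hrel y x hy hx).mpr ⟨q, hq, hyx⟩
          have h1 : h y = h x ^ ((q' : ℚ) : ℝ) := hhom y x hy hx q' hq' hyx'
          have hlogx : Real.log (h x) ≠ 0 := by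
            intro h0
            apply hx1
            have hhx := hpos x hx
            have := Real.exp_log hhx
            rw [h0, Real.exp_zero] at this
            exact this.symm
          have hqq : (q' : ℝ) = (q : ℝ) := by
            have e1 := (rpow_iff_log (hpos x hx) (hpos y hy) q').mp h1
            rw [hlog] at e1
            rw [Rat.smul_def, Rat.smul_def] at e1
            exact mul_right_cancel₀ hlogx e1.symm
          have hq'q : q' = q := by exact_mod_cast hqq
          rw [hq'q] at hyx'
          exact (rpow_iff_log hx hy q).mp hyx'
    have hla : (0:ℝ) < |lam| := abs_pos.mpr hl
    have hma : (0:ℝ) < |μ| := abs_pos.mpr hm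
    obtain ⟨g, hga, hgb⟩ := exists_pair (Real.log |lam|) (Real.log |μ|)
      (Real.log (h |lam|)) (Real.log (h |μ|))
      (fun q hq => c1 _ _ hla hma q hq)
      (fun q hq => c1 _ _ hma hla q hq)
      (fun q hq => c2 _ _ hla hma q hq)
      (fun q hq => c2 _ _ hma hla q hq)
    refine ⟨FofG (g : ℝ → ℝ), FofG_isMulAuto g, ?_, ?_⟩
    · exact (FofG_val hodd hpos g lam hl hga).symm ▸ rfl
    · exact (FofG_val hodd hpos g μ hm hgb).symm ▸ rfl
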